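/- Let (g_n) be a sequence in SL(2,ℝ) with ‖g_n‖ → ∞. Then there exists a subsequence (g_{n_p}) such that for every β ∈ L²(λ) which is not λ-a.e. zero, the L²(λ)-norm ‖T′(g_{n_p})β‖ tends to ∞ as p → ∞. -/

import Mathlib

open MeasureTheory Matrix
open scoped ENNReal NNReal

set_option maxHeartbeats 1000000

noncomputable section

/-- `SL(2,ℝ)`, the group of real 2×2 matrices of determinant 1. -/
abbrev SL2 := Matrix.SpecialLinearGroup (Fin 2) ℝ

/-- The Cauchy probability measure on `ℝ`, with density `ρ ↦ 1/(π(1+ρ²))` with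
respect to Lebesgue measure. -/
def cauchyM : Measure ℝ :=
  volume.withDensity fun ρ => ENNReal.ofReal (1 / (Real.pi * (1 + ρ ^ 2)))

/-- The Möbius right action `ρ·g = (aρ+c)/(bρ+d)` of `g = [[a,b],[c,d]] ∈ SL(2,ℝ)`
on `ℝ` (here `a = g 0 0`, `b = g 0 1`, `c = g 1 0`, `d = g 1 1`). -/
def mob (g : SL2) (ρ : ℝ) : ℝ :=
  (g.1 0 0 * ρ + g.1 1 0) / (g.1 0 1 * ρ + g.1 1 1)

/-- The factor `κ_g(ρ) = ((aρ+c)² + (bρ+d)²)/(ρ²+1)`. -/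
def kappa (g : SL2) (ρ : ℝ) : ℝ :=
  ((g.1 0 0 * ρ + g.1 1 0) ^ 2 + (g.1 0 1 * ρ + g.1 1 1) ^ 2) / (ρ ^ 2 + 1)


/-- The norm `‖g‖ = (a² + b² + c² + d²)^{1/2}` on `SL(2,ℝ)`. -/
def gnorm (g : SL2) : ℝ :=
  Real.sqrt ((g.1 0 0) ^ 2 + (g.1 0 1) ^ 2 + (g.1 1 0) ^ 2 + (g.1 1 1) ^ 2)

/-- If `‖g_n‖ → ∞` in `SL(2,ℝ)`, then there is a subsequence `(g_{n_p})` such that for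
every `β ∈ L²(λ)` which is not λ-a.e. zero, the `L²(λ)`-norm of
`T′(g_{n_p})β : ρ ↦ κ_{g_{n_p}}(ρ)⁻² β(ρ·g_{n_p})` tends to `∞` as `p → ∞`. -/
lemma detfact (h : SL2) : h.1 0 0 * h.1 1 1 - h.1 0 1 * h.1 1 0 = 1 := by
  have := h.2; rwa [Matrix.det_fin_two] at this

lemma inv_entries (h : SL2) :
    (h⁻¹).1 0 0 = h.1 1 1 ∧ (h⁻¹).1 0 1 = -h.1 0 1 ∧
    (h⁻¹).1 1 0 = -h.1 1 0 ∧ (h⁻¹).1 1 1 = h.1 0 0 := by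
  rw [SpecialLinearGroup.SL2_inv_expl]
  refine ⟨rfl, rfl, rfl, rfl⟩

lemma kappa_inv (h : SL2) (σ : ℝ) :
    kappa h⁻¹ σ = ((h.1 1 1 * σ + -h.1 1 0) ^ 2 + (-h.1 0 1 * σ + h.1 0 0) ^ 2) / (σ ^ 2 + 1) := by
  obtain ⟨e1, e2, e3, e4⟩ := inv_entries h
  rw [kappa, e1, e2, e3, e4]

lemma kappa_nonneg (h : SL2) (ρ : ℝ) : 0 ≤ kappa h ρ := by
  rw [kappa]; positivity

lemma real_key (a b c d ρ : ℝ) (hdet : a*d - b*c = 1) (hden : b*ρ+d ≠ 0) :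
    (1/(Real.pi*(1+ρ^2))) * ((((a*ρ+c)^2+(b*ρ+d)^2)/(ρ^2+1))^2)⁻¹^2
    = ((b*ρ+d)^2)⁻¹ *
      (((d * ((a*ρ+c)/(b*ρ+d)) + -c)^2 + (-b * ((a*ρ+c)/(b*ρ+d)) + a)^2) / (((a*ρ+c)/(b*ρ+d))^2+1))^3
      * (1/(Real.pi*(1+((a*ρ+c)/(b*ρ+d))^2))) := by
  have hq : (0:ℝ) < (b*ρ+d)^2 := by positivity
  have hS : (0:ℝ) < (a*ρ+c)^2+(b*ρ+d)^2 := by positivity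
  have hρ : (0:ℝ) < ρ^2+1 := by positivity
  have hπ : Real.pi ≠ 0 := Real.pi_ne_zero
  have hden2 : ρ*b+d ≠ 0 := by rwa [mul_comm] at hden
  set σ : ℝ := (a*ρ+c)/(b*ρ+d) with hσ
  have e1 : d * σ + -c = ρ/(b*ρ+d) := by
    rw [hσ]; field_simp; linear_combination ρ * hdet
  have e2 : -b * σ + a = 1/(b*ρ+d) := by
    rw [hσ]; field_simp; linear_combination hdet
  have e3 : σ^2 + 1 = ((a*ρ+c)^2+(b*ρ+d)^2)/(b*ρ+d)^2 := by
    rw [hσ]; field_simp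
  have e4 : 1 + σ^2 = ((a*ρ+c)^2+(b*ρ+d)^2)/(b*ρ+d)^2 := by rw [add_comm, e3]
  rw [e1, e2, e3, e4]
  field_simp
  ring

lemma key_le (h : SL2) (β : ℝ → ℝ) :
    ∫⁻ σ, ENNReal.ofReal (kappa h⁻¹ σ ^ 3 * β σ ^ 2) ∂cauchyM
      ≤ ∫⁻ ρ, ENNReal.ofReal (((kappa h ρ ^ 2)⁻¹ * β (mob h ρ)) ^ 2) ∂cauchyM := by
  set a := h.1 0 0 with ha
  set b := h.1 0 1 with hb
  set c := h.1 1 0 with hc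
  set d := h.1 1 1 with hd
  have hdet : a*d - b*c = 1 := detfact h
  set s : Set ℝ := {ρ | b*ρ+d ≠ 0} with hsdef
  have hcont : Continuous fun ρ : ℝ => b*ρ+d := by fun_prop
  have hs : MeasurableSet s := by
    have : s = (fun ρ : ℝ => b*ρ+d) ⁻¹' ({0}ᶜ) := rfl
    rw [this]
    exact hcont.measurable (measurableSet_singleton 0).compl
  set D : ℝ → ℝ≥0∞ := fun t => ENNReal.ofReal (1/(Real.pi*(1+t^2))) with hDdef
  have hD : Measurable D := by
    apply ENNReal.measurable_ofReal.comp
    fun_prop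
  have hca : cauchyM = volume.withDensity D := rfl
  set G : ℝ → ℝ≥0∞ := fun σ => ENNReal.ofReal (kappa h⁻¹ σ ^ 3 * β σ ^ 2) with hGdef
  set R : ℝ → ℝ≥0∞ := fun ρ => ENNReal.ofReal (((kappa h ρ ^ 2)⁻¹ * β (mob h ρ)) ^ 2) with hRdef
  -- the derivative
  have hder : ∀ x ∈ s, HasDerivWithinAt (mob h) (((b*x+d)^2)⁻¹) s x := by
    intro x hx
    have hx' : b*x+d ≠ 0 := hx
    have h1 : HasDerivAt (fun ρ : ℝ => (a*ρ+c)/(b*ρ+d))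
        ((a*(b*x+d) - (a*x+c)*b)/(b*x+d)^2) x := by
      have := (((hasDerivAt_id x).const_mul a).add_const c).div
        (((hasDerivAt_id x).const_mul b).add_const d) hx'
      simpa [Pi.div_def] using this
    have h2 : (a*(b*x+d) - (a*x+c)*b)/(b*x+d)^2 = ((b*x+d)^2)⁻¹ := by
      have h3 : a*(b*x+d) - (a*x+c)*b = 1 := by linear_combination hdet
      rw [h3, one_div]
    rw [h2] at h1
    have : mob h = fun ρ : ℝ => (a*ρ+c)/(b*ρ+d) := rfl
    rw [this]
    exact h1.hasDerivWithinAt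
  -- injectivity
  have hinj : Set.InjOn (mob h) s := by
    intro x hx y hy hxy
    have hx' : b*x+d ≠ 0 := hx
    have hy' : b*y+d ≠ 0 := hy
    have hxy' : (a*x+c)/(b*x+d) = (a*y+c)/(b*y+d) := hxy
    rw [div_eq_div_iff hx' hy'] at hxy'
    linear_combination hxy' - (x - y) * hdet
  -- image is co-null
  set T : Set ℝ := mob h '' s with hTdef
  have himg : {σ : ℝ | a - b*σ ≠ 0} ⊆ T := by
    intro σ hσ
    have hσ' : a - b*σ ≠ 0 := hσ
    have hσ2 : a - σ*b ≠ 0 := by rwa [mul_comm] at hσ'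
    refine ⟨(d*σ - c)/(a - b*σ), ?_, ?_⟩
    · show b * ((d*σ - c)/(a - b*σ)) + d ≠ 0
      have : b * ((d*σ - c)/(a - b*σ)) + d = 1/(a - b*σ) := by
        field_simp
        linear_combination hdet
      rw [this]
      exact one_div_ne_zero hσ'
    · show (a * ((d*σ - c)/(a - b*σ)) + c) / (b * ((d*σ - c)/(a - b*σ)) + d) = σ
      have h1 : b * ((d*σ - c)/(a - b*σ)) + d = 1/(a - b*σ) := by
        field_simp
        linear_combination hdet
      have h2 : a * ((d*σ - c)/(a - b*σ)) + c = σ/(a - b*σ) := by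
        field_simp
        linear_combination σ * hdet
      rw [h1, h2]
      field_simp
  have hTnull : volume Tᶜ = 0 := by
    have hsub : Tᶜ ⊆ {σ : ℝ | a - b*σ = 0} := by
      intro σ hσ
      by_contra hne
      exact hσ (himg hne)
    refine measure_mono_null hsub ?_
    by_cases hb0 : b = 0
    · have ha0 : a ≠ 0 := by
        intro h0
        rw [hb0, h0] at hdet; simp at hdet
      have : {σ : ℝ | a - b*σ = 0} = ∅ := by
        ext σ; simp [hb0, ha0, Set.mem_setOf_eq]
      simp [this]
    · refine measure_mono_null (fun σ hσ => ?_) (Real.volume_singleton (a := a/b))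
      have hσ' : a - b*σ = 0 := hσ
      have : σ = a/b := by field_simp; linear_combination -hσ'
      exact this
  -- the chain
  calc ∫⁻ σ, G σ ∂cauchyM
      = ∫⁻ σ, (D * G) σ ∂volume := by
        rw [hca, lintegral_withDensity_eq_lintegral_mul_non_measurable volume hD
          (ae_of_all _ fun t => ENNReal.ofReal_lt_top)]
    _ = ∫⁻ σ in T, (D * G) σ ∂volume := by
        have : volume.restrict T = volume := by
          rw [Measure.restrict_congr_set (MeasureTheory.ae_eq_univ.2 hTnull),
            Measure.restrict_univ]
        rw [this]
    _ = ∫⁻ x in s, ENNReal.ofReal |((b*x+d)^2)⁻¹| * (D * G) (mob h x) ∂volume := by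
        have := lintegral_image_eq_lintegral_abs_det_fderiv_mul volume hs
          (fun x hx => (hder x hx).hasFDerivWithinAt) hinj (D * G)
        simpa [ContinuousLinearMap.det_toSpanSingleton] using this
    _ = ∫⁻ x in s, (D * R) x ∂volume := by
        refine setLIntegral_congr_fun hs (fun x hx => ?_)
        have hx' : b*x+d ≠ 0 := hx
        simp only [Pi.mul_apply, hGdef, hRdef, hDdef]
        rw [← ENNReal.ofReal_mul (by positivity), ← ENNReal.ofReal_mul (by positivity),
          ← ENNReal.ofReal_mul (by positivity)]
        congr 1
        have hmob : mob h x = (a*x+c)/(b*x+d) := rfl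
        have hκ : kappa h x = ((a*x+c)^2+(b*x+d)^2)/(x^2+1) := rfl
        rw [kappa_inv, ← ha, ← hb, ← hc, ← hd, hmob, hκ, abs_of_nonneg (by positivity : (0:ℝ) ≤ ((b*x+d)^2)⁻¹)]
        have := real_key a b c d x hdet hx'
        rw [mul_pow, ← mul_assoc (1 / (Real.pi * (1 + x ^ 2))), this]
        ring
    _ = ∫⁻ x in s, R x ∂cauchyM := by
        rw [hca, setLIntegral_withDensity_eq_setLIntegral_mul_non_measurable volume hD R hs
          (ae_of_all _ fun t => ENNReal.ofReal_lt_top)]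
    _ ≤ ∫⁻ x, R x ∂cauchyM := setLIntegral_le_lintegral s R

lemma gnorm_inv (h : SL2) : gnorm h⁻¹ = gnorm h := by
  obtain ⟨e1, e2, e3, e4⟩ := inv_entries h
  rw [gnorm, gnorm, e1, e2, e3, e4]
  congr 1
  ring

lemma nnnorm_sq_ofReal (r : ℝ) : (‖r‖₊ : ℝ≥0∞) ^ (2:ℝ) = ENNReal.ofReal (r ^ 2) := by
  rw [← enorm_eq_nnnorm, Real.enorm_eq_ofReal_abs, ENNReal.ofReal_rpow_of_nonneg (abs_nonneg r) (by norm_num)]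
  congr 1
  rw [show (2:ℝ) = ((2:ℕ):ℝ) by norm_num, Real.rpow_natCast, sq_abs]

lemma gnorm_pos (h : SL2) : 0 < gnorm h := by
  rw [gnorm]
  apply Real.sqrt_pos.2
  have hdet := detfact h
  nlinarith [sq_nonneg (h.1 0 0 - h.1 1 1), sq_nonneg (h.1 0 1 + h.1 1 0),
    sq_nonneg (h.1 0 0), sq_nonneg (h.1 0 1), sq_nonneg (h.1 1 0), sq_nonneg (h.1 1 1)]

lemma entry_le_gnorm (h : SL2) (i j : Fin 2) : |h.1 i j| ≤ gnorm h := by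
  rw [gnorm, ← Real.sqrt_sq_eq_abs (h.1 i j)]
  apply Real.sqrt_le_sqrt
  fin_cases i <;> fin_cases j <;> simp only [Fin.zero_eta, Fin.mk_one] <;> nlinarith [sq_nonneg (h.1 0 0), sq_nonneg (h.1 0 1),
    sq_nonneg (h.1 1 0), sq_nonneg (h.1 1 1)]

lemma kappa_continuous (h : SL2) : Continuous (kappa h) := by
  unfold kappa
  refine Continuous.div (by fun_prop) (by fun_prop) fun x => by positivity

theorem dual_action_norm_tendsto_infty
    (g : ℕ → SL2) (hg : Filter.Tendsto (fun n => gnorm (g n)) Filter.atTop Filter.atTop) :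
    ∃ φ : ℕ → ℕ, StrictMono φ ∧
      ∀ β : ℝ → ℝ, MemLp β 2 cauchyM → ¬ (β =ᵐ[cauchyM] fun _ => (0 : ℝ)) →
        Filter.Tendsto
          (fun p => eLpNorm (fun ρ => (kappa (g (φ p)) ρ ^ 2)⁻¹ * β (mob (g (φ p)) ρ)) 2 cauchyM)
          Filter.atTop (nhds ⊤) := by
  classical
  set v : ℕ → (Fin 2 → Fin 2 → ℝ) := fun n i j => ((g n)⁻¹).1 i j / gnorm (g n) with hv
  have hvmem : ∀ n, v n ∈ Metric.closedBall (0 : Fin 2 → Fin 2 → ℝ) 1 := by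
    intro n
    rw [Metric.mem_closedBall, dist_zero_right]
    refine (pi_norm_le_iff_of_nonneg zero_le_one).2 fun i => ?_
    refine (pi_norm_le_iff_of_nonneg zero_le_one).2 fun j => ?_
    rw [Real.norm_eq_abs, hv]
    simp only
    rw [abs_div, abs_of_pos (gnorm_pos (g n))]
    rw [div_le_one (gnorm_pos (g n))]
    calc |((g n)⁻¹).1 i j| ≤ gnorm ((g n)⁻¹) := entry_le_gnorm _ i j
      _ = gnorm (g n) := gnorm_inv (g n)
  obtain ⟨M, -, φ, hφ, hMlim⟩ :=
    (isCompact_closedBall (0 : Fin 2 → Fin 2 → ℝ) 1).tendsto_subseq hvmem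
  refine ⟨φ, hφ, ?_⟩
  intro β hβ hβ0
  have hN : Filter.Tendsto (fun p => gnorm (g (φ p))) Filter.atTop Filter.atTop :=
    hg.comp hφ.tendsto_atTop
  have hent : ∀ i j, Filter.Tendsto (fun p => v (φ p) i j) Filter.atTop (nhds (M i j)) := by
    intro i j
    have h1 := tendsto_pi_nhds.1 hMlim i
    exact tendsto_pi_nhds.1 h1 j
  -- sum of squares of limits is 1
  have hsumv : ∀ n, (v n 0 0)^2 + (v n 0 1)^2 + (v n 1 0)^2 + (v n 1 1)^2 = 1 := by
    intro n
    obtain ⟨e1, e2, e3, e4⟩ := inv_entries (g n)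
    have hNn := gnorm_pos (g n)
    have hval : gnorm (g n) ^ 2
        = ((g n).1 0 0)^2 + ((g n).1 0 1)^2 + ((g n).1 1 0)^2 + ((g n).1 1 1)^2 :=
      Real.sq_sqrt (by positivity)
    simp only [hv, e1, e2, e3, e4]
    field_simp
    linear_combination -hval
  have hsum : (M 0 0)^2 + (M 0 1)^2 + (M 1 0)^2 + (M 1 1)^2 = 1 := by
    have h1 : Filter.Tendsto
        (fun p => (v (φ p) 0 0)^2 + (v (φ p) 0 1)^2 + (v (φ p) 1 0)^2 + (v (φ p) 1 1)^2)
        Filter.atTop (nhds ((M 0 0)^2 + (M 0 1)^2 + (M 1 0)^2 + (M 1 1)^2)) := by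
      exact ((((hent 0 0).pow 2).add ((hent 0 1).pow 2)).add ((hent 1 0).pow 2)).add
        ((hent 1 1).pow 2)
    have h2 : Filter.Tendsto
        (fun p => (v (φ p) 0 0)^2 + (v (φ p) 0 1)^2 + (v (φ p) 1 0)^2 + (v (φ p) 1 1)^2)
        Filter.atTop (nhds 1) := by
      simp only [fun p => hsumv (φ p)]
      exact tendsto_const_nhds
    exact tendsto_nhds_unique h1 h2
  set Q : ℝ → ℝ := fun σ => (M 0 0 * σ + M 1 0)^2 + (M 0 1 * σ + M 1 1)^2 with hQ
  -- the bad set is null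
  have hQvol : volume {σ : ℝ | Q σ = 0} = 0 := by
    by_cases h00 : M 0 0 = 0 ∧ M 0 1 = 0
    · have : {σ : ℝ | Q σ = 0} = ∅ := by
        ext σ
        simp only [Set.mem_setOf_eq, Set.mem_empty_iff_false, iff_false]
        simp only [hQ, h00.1, h00.2, zero_mul, zero_add]
        nlinarith [hsum, h00.1, h00.2]
      simp [this]
    · rcases not_and_or.1 h00 with h0 | h0
      · refine measure_mono_null (fun σ hσ => ?_) (Real.volume_singleton (a := -(M 1 0)/(M 0 0)))
        have hσ' : Q σ = 0 := hσ
        have h1 : M 0 0 * σ + M 1 0 = 0 := by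
          have := (add_eq_zero_iff_of_nonneg (sq_nonneg _) (sq_nonneg _)).1 hσ'
          exact pow_eq_zero_iff two_ne_zero |>.1 this.1
        show σ = -(M 1 0)/(M 0 0)
        field_simp
        linarith
      · refine measure_mono_null (fun σ hσ => ?_) (Real.volume_singleton (a := -(M 1 1)/(M 0 1)))
        have hσ' : Q σ = 0 := hσ
        have h1 : M 0 1 * σ + M 1 1 = 0 := by
          have := (add_eq_zero_iff_of_nonneg (sq_nonneg _) (sq_nonneg _)).1 hσ'
          exact pow_eq_zero_iff two_ne_zero |>.1 this.2
        show σ = -(M 1 1)/(M 0 1)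
        field_simp
        linarith
  have hQnull : cauchyM {σ : ℝ | Q σ = 0} = 0 :=
    withDensity_absolutelyContinuous volume _ hQvol
  -- kappa of inverses tends to infinity off the bad set
  have hκt : ∀ σ : ℝ, Q σ ≠ 0 →
      Filter.Tendsto (fun p => kappa ((g (φ p))⁻¹) σ) Filter.atTop Filter.atTop := by
    intro σ hQσ
    have hrew : ∀ n, kappa ((g n)⁻¹) σ
        = (gnorm (g n) * gnorm (g n)) *
          (((v n 0 0 * σ + v n 1 0)^2 + (v n 0 1 * σ + v n 1 1)^2)/(σ^2+1)) := by
      intro n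
      have hNn := gnorm_pos (g n)
      have hσ1 : (0:ℝ) < σ^2+1 := by positivity
      rw [kappa]
      simp only [hv]
      field_simp
    simp only [fun p => hrew (φ p)]
    have hQpos : 0 < ((M 0 0 * σ + M 1 0)^2 + (M 0 1 * σ + M 1 1)^2)/(σ^2+1) := by
      have h1 : 0 < (M 0 0 * σ + M 1 0)^2 + (M 0 1 * σ + M 1 1)^2 := by
        rcases lt_or_eq_of_le (by positivity :
          (0:ℝ) ≤ (M 0 0 * σ + M 1 0)^2 + (M 0 1 * σ + M 1 1)^2) with h | h
        · exact h
        · exact absurd h.symm hQσ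
      positivity
    refine Filter.Tendsto.atTop_mul_pos hQpos (hN.atTop_mul_atTop₀ hN) ?_
    refine Filter.Tendsto.div_const ?_ _
    exact (((((hent 0 0).mul_const σ).add (hent 1 0)).pow 2).add
      ((((hent 0 1).mul_const σ).add (hent 1 1)).pow 2))
  -- measurable representative of β
  set β' : ℝ → ℝ := hβ.aestronglyMeasurable.mk β with hβ'def
  have hββ' : β =ᵐ[cauchyM] β' := hβ.aestronglyMeasurable.ae_eq_mk
  have hβ'm : Measurable β' := hβ.aestronglyMeasurable.stronglyMeasurable_mk.measurable
  have hβ'0 : cauchyM {σ | β' σ ≠ 0} ≠ 0 := by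
    intro h0
    apply hβ0
    refine hββ'.trans ?_
    exact (MeasureTheory.ae_iff).2 h0
  -- Fatou argument
  set F : ℕ → ℝ → ℝ≥0∞ :=
    fun p σ => ENNReal.ofReal (kappa ((g (φ p))⁻¹) σ ^ 3 * β' σ ^ 2) with hF
  have hFmeas : ∀ p, Measurable (F p) := by
    intro p
    exact (((kappa_continuous ((g (φ p))⁻¹)).measurable.pow_const 3).mul
      (hβ'm.pow_const 2)).ennreal_ofReal
  have hKtop : (⊤:ℝ≥0∞) ≤ Filter.liminf (fun p => ∫⁻ σ, F p σ ∂cauchyM) Filter.atTop := by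
    refine le_trans ?_ (lintegral_liminf_le hFmeas)
    set A : Set ℝ := {σ | β' σ ≠ 0} ∩ {σ | Q σ ≠ 0} with hA
    have hAmeas : MeasurableSet A := by
      refine MeasurableSet.inter ?_ ?_
      · exact (hβ'm (measurableSet_singleton 0)).compl
      · have hQm : Measurable Q := by fun_prop
        exact (hQm (measurableSet_singleton 0)).compl
    have hAne : cauchyM A ≠ 0 := by
      intro h0
      apply hβ'0
      have hsub : {σ | β' σ ≠ 0} ⊆ A ∪ {σ : ℝ | Q σ = 0} := by
        intro σ hσ
        by_cases hq : Q σ = 0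
        · exact Or.inr hq
        · exact Or.inl ⟨hσ, hq⟩
      refine le_antisymm ?_ zero_le
      calc cauchyM {σ | β' σ ≠ 0} ≤ cauchyM (A ∪ {σ : ℝ | Q σ = 0}) := measure_mono hsub
        _ ≤ cauchyM A + cauchyM {σ : ℝ | Q σ = 0} := measure_union_le _ _
        _ = 0 := by rw [h0, hQnull, add_zero]
    have hlim : ∀ σ ∈ A, Filter.Tendsto (fun p => F p σ) Filter.atTop (nhds ⊤) := by
      intro σ hσ
      have hq : Q σ ≠ 0 := hσ.2
      have hb : β' σ ≠ 0 := hσ.1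
      have h1 : Filter.Tendsto (fun p => kappa ((g (φ p))⁻¹) σ ^ 3 * β' σ ^ 2)
          Filter.atTop Filter.atTop := by
        have h2 : Filter.Tendsto (fun p => kappa ((g (φ p))⁻¹) σ ^ 3)
            Filter.atTop Filter.atTop := (Filter.tendsto_pow_atTop three_ne_zero).comp (hκt σ hq)
        exact h2.atTop_mul_const (by positivity : (0:ℝ) < β' σ ^ 2)
      exact ENNReal.tendsto_ofReal_atTop.comp h1
    calc (⊤:ℝ≥0∞) = ∫⁻ _ in A, ⊤ ∂cauchyM := by
          rw [setLIntegral_const, ENNReal.top_mul hAne]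
      _ = ∫⁻ σ in A, Filter.liminf (fun p => F p σ) Filter.atTop ∂cauchyM := by
          refine setLIntegral_congr_fun hAmeas (fun σ hσ => ?_)
          exact ((hlim σ hσ).liminf_eq).symm
      _ ≤ ∫⁻ σ, Filter.liminf (fun p => F p σ) Filter.atTop ∂cauchyM :=
          setLIntegral_le_lintegral _ _
  set J : ℕ → ℝ≥0∞ := fun p =>
    ∫⁻ ρ, ENNReal.ofReal (((kappa (g (φ p)) ρ ^ 2)⁻¹ * β (mob (g (φ p)) ρ)) ^ 2) ∂cauchyM
    with hJ
  have hJK : ∀ p, (∫⁻ σ, F p σ ∂cauchyM) ≤ J p := by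
    intro p
    have h1 : (∫⁻ σ, F p σ ∂cauchyM)
        = ∫⁻ σ, ENNReal.ofReal (kappa ((g (φ p))⁻¹) σ ^ 3 * β σ ^ 2) ∂cauchyM := by
      refine lintegral_congr_ae ?_
      filter_upwards [hββ'] with σ hσ
      rw [hF]
      simp only
      rw [hσ]
    rw [h1]
    exact key_le (g (φ p)) β
  have hJtop : Filter.Tendsto J Filter.atTop (nhds ⊤) := by
    have hlim : Filter.liminf J Filter.atTop = ⊤ := by
      refine top_le_iff.1 ?_
      refine le_trans hKtop ?_
      exact Filter.liminf_le_liminf (Filter.Eventually.of_forall hJK)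
    have hls : Filter.limsup J Filter.atTop = ⊤ :=
      top_le_iff.1 (hlim ▸ Filter.liminf_le_limsup)
    exact tendsto_of_liminf_eq_limsup hlim hls
  have heq : ∀ p, eLpNorm (fun ρ => (kappa (g (φ p)) ρ ^ 2)⁻¹ * β (mob (g (φ p)) ρ)) 2 cauchyM
      = (J p) ^ (1/2 : ℝ) := by
    intro p
    rw [eLpNorm_eq_lintegral_rpow_enorm_toReal two_ne_zero ENNReal.ofNat_ne_top]
    rw [hJ]
    simp only [ENNReal.toReal_ofNat]
    congr 1
    refine lintegral_congr fun ρ => ?_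
    exact nnnorm_sq_ofReal _
  simp only [heq]
  have hcont : Filter.Tendsto (fun x : ℝ≥0∞ => x ^ (1/2:ℝ)) (nhds ⊤) (nhds ⊤) := by
    have h1 := ENNReal.continuous_rpow_const (y := (1/2:ℝ)).tendsto (⊤:ℝ≥0∞)
    rwa [ENNReal.top_rpow_of_pos (by norm_num)] at h1
  exact hcont.comp hJtop
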